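/- Let X and R be bounded F-optional processes and define the reward process X̂ := X 1_{⟦0,θ⟦} + R_θ 1_{⟦θ,∞⟦}. For a finite F-stopping time τ, define the process X(τ) := R 1_{⟦0,τ⟧} + X_τ 1_{⟧τ,∞⟦}. Then X(τ) is optional with respect to the stopped filtration F^τ = (F_{t∧τ}), and X̂_τ = X_θ(τ) almost surely, i.e. X̂_τ = R_θ 1_{θ ≤ τ} + X_τ 1_{θ > τ}. -/

import Mathlib

open MeasureTheory Filter Set

variable {Ω : Type*}

def optionalSigma (ℱ : ℝ → MeasurableSpace Ω) : MeasurableSpace (ℝ × Ω) :=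
  ⨆ (Y : ℝ → Ω → ℝ) (_ : (∀ t, Measurable[ℱ t] (Y t)) ∧
      (∀ ω t, ContinuousWithinAt (fun s => Y s ω) (Set.Ici t) t) ∧
      (∀ ω t, ∃ l : ℝ, Tendsto (fun s => Y s ω) (nhdsWithin t (Set.Iio t)) (nhds l))),
    MeasurableSpace.comap (fun p : ℝ × Ω => Y p.1 p.2) inferInstance

def IsOptional (ℱ : ℝ → MeasurableSpace Ω) (X : ℝ → Ω → ℝ) : Prop :=
  Measurable[optionalSigma ℱ] fun p : ℝ × Ω => X p.1 p.2

/-- A generator process is measurable for the optional σ-field. -/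
lemma measurable_optionalSigma_of (ℱ : ℝ → MeasurableSpace Ω) (Y : ℝ → Ω → ℝ)
    (h : (∀ t, Measurable[ℱ t] (Y t)) ∧
      (∀ ω t, ContinuousWithinAt (fun s => Y s ω) (Set.Ici t) t) ∧
      (∀ ω t, ∃ l : ℝ, Tendsto (fun s => Y s ω) (nhdsWithin t (Set.Iio t)) (nhds l))) :
    Measurable[optionalSigma ℱ] fun p : ℝ × Ω => Y p.1 p.2 := by
  rw [measurable_iff_comap_le]
  exact le_iSup_of_le Y (le_iSup_of_le h le_rfl)

section crux

variable {m0 : MeasurableSpace Ω} {𝒻 : Filtration ℝ m0} {τ : Ω → ℝ}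

/-- Key measurability: for adapted right-continuous `Y`, `ω ↦ Y (min t (τ ω)) ω`
is `𝒻 t`-measurable. -/
lemma crux (hτ : IsStoppingTime 𝒻 (fun ω => (τ ω : WithTop ℝ))) (Y : ℝ → Ω → ℝ)
    (hA : ∀ t, Measurable[𝒻 t] (Y t))
    (hrc : ∀ ω t, ContinuousWithinAt (fun s => Y s ω) (Set.Ici t) t) (t : ℝ) :
    Measurable[𝒻 t] fun ω => Y (min t (τ ω)) ω := by
  letI : MeasurableSpace Ω := 𝒻 t
  have hmin : Measurable[𝒻 t] fun ω => min t (τ ω) := by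
    have h1 := ((hτ.min_const t).measurable_of_le (fun ω => min_le_right _ _)).untopD 0
    have h2 : (fun ω => min t (τ ω))
        = fun ω => (min ((τ ω : WithTop ℝ)) (t : WithTop ℝ)).untopD 0 :=
      funext fun ω => by rw [← WithTop.coe_min, WithTop.untopD_coe, min_comm]
    rw [h2]; exact h1
  set fn : ℕ → Ω → ℝ :=
    fun n ω => min t ((((⌊min t (τ ω) * 2 ^ n⌋ : ℤ) : ℝ) + 1) / 2 ^ n) with hfn_def
  have hfn : ∀ n, Measurable[𝒻 t] (fn n) := by
    intro n
    exact measurable_const.min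
      ((((measurable_from_top.comp ((hmin.mul_const _).floor)).add_const 1).div_const _))
  have hfn_range : ∀ n, (Set.range (fn n)).Countable := by
    intro n
    have : Set.range (fn n) ⊆ Set.range (fun k : ℤ => min t (((k : ℝ) + 1) / 2 ^ n)) := by
      rintro x ⟨ω, rfl⟩
      exact ⟨⌊min t (τ ω) * 2 ^ n⌋, rfl⟩
    exact (Set.countable_range _).mono this
  have hfn_le : ∀ n ω, fn n ω ≤ t := fun n ω => min_le_left _ _
  have hgn : ∀ n, Measurable[𝒻 t] fun ω => Y (fn n ω) ω := by
    intro n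
    intro B hB
    have key : (fun ω => Y (fn n ω) ω) ⁻¹' B
        = ⋃ v ∈ Set.range (fn n), (fn n ⁻¹' {v} ∩ (Y v) ⁻¹' B) := by
      ext ω
      simp only [Set.mem_preimage, Set.mem_iUnion, Set.mem_inter_iff, Set.mem_singleton_iff]
      constructor
      · intro h; exact ⟨fn n ω, ⟨ω, rfl⟩, rfl, by simpa using h⟩
      · rintro ⟨v, _, hv, h⟩; rw [hv]; exact h
    rw [key]
    refine MeasurableSet.biUnion (hfn_range n) fun v hv => ?_
    obtain ⟨ω₀, rfl⟩ := hv
    exact ((hfn n) (measurableSet_singleton _)).inter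
      ((𝒻.mono (hfn_le n ω₀)) _ (hA _ hB))
  have hconv : ∀ ω, Tendsto (fun n => Y (fn n ω) ω) atTop (nhds (Y (min t (τ ω)) ω)) := by
    intro ω
    set s₀ := min t (τ ω) with hs₀
    have hs₀t : s₀ ≤ t := min_le_left _ _
    have hlo : ∀ n, s₀ ≤ fn n ω := by
      intro n
      refine le_min hs₀t (le_of_lt ?_)
      rw [lt_div_iff₀ (by positivity : (0:ℝ) < 2 ^ n)]
      exact Int.lt_floor_add_one _
    have hhi : ∀ n, fn n ω ≤ s₀ + (2 ^ n)⁻¹ := by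
      intro n
      refine (min_le_right _ _).trans ?_
      rw [div_le_iff₀ (by positivity : (0:ℝ) < 2 ^ n)]
      have := Int.floor_le (s₀ * 2 ^ n)
      have h2 : (0:ℝ) < 2 ^ n := by positivity
      calc ((⌊s₀ * 2 ^ n⌋ : ℝ) + 1) ≤ s₀ * 2 ^ n + 1 := by linarith
        _ = (s₀ + (2 ^ n)⁻¹) * 2 ^ n := by field_simp
    have hupper : Tendsto (fun n : ℕ => s₀ + ((2:ℝ) ^ n)⁻¹) atTop (nhds s₀) := by
      have : Tendsto (fun n : ℕ => ((2:ℝ) ^ n)⁻¹) atTop (nhds 0) := by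
        simpa [Pi.inv_def] using (tendsto_pow_atTop_atTop_of_one_lt (by norm_num : (1:ℝ) < 2)).inv_tendsto_atTop
      simpa using tendsto_const_nhds.add this
    have htend : Tendsto (fun n => fn n ω) atTop (nhds s₀) :=
      tendsto_of_tendsto_of_tendsto_of_le_of_le tendsto_const_nhds hupper hlo hhi
    have htend' : Tendsto (fun n => fn n ω) atTop (nhdsWithin s₀ (Set.Ici s₀)) :=
      tendsto_nhdsWithin_of_tendsto_nhds_of_eventually_within _ htend
        (Eventually.of_forall hlo)
    exact Filter.Tendsto.comp (hrc ω s₀) htend'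
  exact measurable_of_tendsto_metrizable hgn (tendsto_pi_nhds.mpr hconv)

/-- Stopped generator is a generator for the stopped filtration. -/
lemma stopped_gen (hτ : IsStoppingTime 𝒻 (fun ω => (τ ω : WithTop ℝ))) (Y : ℝ → Ω → ℝ)
    (h : (∀ t, Measurable[𝒻 t] (Y t)) ∧
      (∀ ω t, ContinuousWithinAt (fun s => Y s ω) (Set.Ici t) t) ∧
      (∀ ω t, ∃ l : ℝ, Tendsto (fun s => Y s ω) (nhdsWithin t (Set.Iio t)) (nhds l))) :
    Measurable[optionalSigma (fun t => ((hτ.min_const t).measurableSpace : MeasurableSpace Ω))]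
      fun p : ℝ × Ω => Y (min p.1 (τ p.2)) p.2 := by
  obtain ⟨hA, hrc, hll⟩ := h
  refine measurable_optionalSigma_of _ (fun s ω => Y (min s (τ ω)) ω) ⟨?_, ?_, ?_⟩
  · -- adaptedness to stopped filtration
    intro t
    have hFt : Measurable[𝒻 t] fun ω => Y (min t (τ ω)) ω := crux hτ Y hA hrc t
    intro B hB
    rw [hτ.measurableSet_min_const_iff]
    constructor
    · -- w.r.t. hτ.measurableSpace
      rw [hτ.measurableSet]
      refine ⟨le_iSup (fun t => (𝒻 t : MeasurableSpace Ω)) t _ (hFt hB), fun i => ?_⟩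
      simp only [WithTop.coe_le_coe]
      rcases le_or_gt t i with hti | hit
      · exact ((𝒻.mono hti) _ (hFt hB)).inter (by simpa only [WithTop.coe_le_coe] using hτ.measurableSet_le i)
      · have heq : ((fun ω => Y (min t (τ ω)) ω) ⁻¹' B) ∩ {ω | τ ω ≤ i}
            = ((fun ω => Y (min i (τ ω)) ω) ⁻¹' B) ∩ {ω | τ ω ≤ i} := by
          ext ω
          simp only [Set.mem_inter_iff, Set.mem_preimage, Set.mem_setOf_eq]
          constructor
          · rintro ⟨h1, h2⟩
            have e1 : min t (τ ω) = τ ω := min_eq_right (h2.trans hit.le)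
            have e2 : min i (τ ω) = τ ω := min_eq_right h2
            rw [e1] at h1
            rw [e2]
            exact ⟨h1, h2⟩
          · rintro ⟨h1, h2⟩
            have e1 : min t (τ ω) = τ ω := min_eq_right (h2.trans hit.le)
            have e2 : min i (τ ω) = τ ω := min_eq_right h2
            rw [e2] at h1
            rw [e1]
            exact ⟨h1, h2⟩
        rw [heq]
        exact ((crux hτ Y hA hrc i) hB).inter (by simpa only [WithTop.coe_le_coe] using hτ.measurableSet_le i)
    · exact hFt hB
  · -- right continuity
    intro ω t
    have hφ : ContinuousWithinAt (fun s => min s (τ ω)) (Set.Ici t) t :=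
      (continuous_id.min continuous_const).continuousWithinAt
    have hmaps : Set.MapsTo (fun s => min s (τ ω)) (Set.Ici t) (Set.Ici (min t (τ ω))) :=
      fun s hs => Set.mem_Ici.mpr (min_le_min (Set.mem_Ici.mp hs) le_rfl)
    exact ContinuousWithinAt.comp (g := fun u => Y u ω) (f := fun s => min s (τ ω))
      (hrc ω (min t (τ ω))) hφ hmaps
  · -- left limits
    intro ω t
    rcases le_or_gt t (τ ω) with hle | hlt
    · obtain ⟨l, hl⟩ := hll ω t
      refine ⟨l, hl.congr' ?_⟩
      filter_upwards [self_mem_nhdsWithin] with s hs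
      rw [min_eq_left (le_of_lt (lt_of_lt_of_le hs hle))]
    · refine ⟨Y (τ ω) ω, tendsto_const_nhds.congr' ?_⟩
      have : ∀ᶠ s in nhdsWithin t (Set.Iio t), τ ω < s :=
        eventually_nhdsWithin_of_eventually_nhds (eventually_gt_nhds hlt)
      filter_upwards [this] with s hs
      rw [min_eq_right hs.le]

/-- The time-change map is measurable between the optional σ-fields. -/
lemma measurable_phi (hτ : IsStoppingTime 𝒻 (fun ω => (τ ω : WithTop ℝ))) :
    @Measurable (ℝ × Ω) (ℝ × Ω)
      (optionalSigma (fun t => ((hτ.min_const t).measurableSpace : MeasurableSpace Ω)))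
      (optionalSigma (fun t => (𝒻 t : MeasurableSpace Ω)))
      (fun p : ℝ × Ω => (min p.1 (τ p.2), p.2)) := by
  rw [measurable_iff_comap_le]
  unfold optionalSigma
  simp_rw [MeasurableSpace.comap_iSup, MeasurableSpace.comap_comp]
  refine iSup₂_le fun Y h => ?_
  have := stopped_gen hτ Y h
  rw [measurable_iff_comap_le] at this
  exact le_trans (le_of_eq rfl) this

end crux

theorem reward_reduction_optional
    {m0 : MeasurableSpace Ω} (μ : Measure Ω) [IsProbabilityMeasure μ]
    (𝒻 : Filtration ℝ m0) (θ : Ω → ℝ) (hθmeas : Measurable θ) (hθpos : ∀ ω, 0 < θ ω)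
    (X R : ℝ → Ω → ℝ)
    (hXopt : IsOptional (fun t => (𝒻 t : MeasurableSpace Ω)) X)
    (hRopt : IsOptional (fun t => (𝒻 t : MeasurableSpace Ω)) R)
    (hXbd : ∃ C, ∀ t ω, |X t ω| ≤ C) (hRbd : ∃ C, ∀ t ω, |R t ω| ≤ C)
    (τ : Ω → ℝ) (hτ : IsStoppingTime 𝒻 (fun ω => (τ ω : WithTop ℝ))) :
    IsOptional (fun t => ((hτ.min_const t).measurableSpace : MeasurableSpace Ω))
        (fun t ω => if t ≤ τ ω then R t ω else X (τ ω) ω) ∧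
      ∀ᵐ ω ∂μ,
        (if τ ω < θ ω then X (τ ω) ω else R (θ ω) ω)
          = (if θ ω ≤ τ ω then R (θ ω) ω else X (τ ω) ω) := by
  constructor
  · -- optionality for the stopped filtration
    unfold IsOptional
    letI mOpt : MeasurableSpace (ℝ × Ω) :=
      optionalSigma fun t => ((hτ.min_const t).measurableSpace : MeasurableSpace Ω)
    have hΦ := measurable_phi (𝒻 := 𝒻) hτ
    have hid_props : (∀ t, Measurable[𝒻 t] (fun (_ : Ω) => t)) ∧
        (∀ (ω : Ω) t, ContinuousWithinAt (fun s : ℝ => s) (Set.Ici t) t) ∧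
        (∀ (ω : Ω) t, ∃ l : ℝ, Tendsto (fun s : ℝ => s)
          (nhdsWithin t (Set.Iio t)) (nhds l)) :=
      ⟨fun t => measurable_const, fun ω t => continuousWithinAt_id,
        fun ω t => ⟨t, continuousWithinAt_id⟩⟩
    have hM : Measurable[mOpt] fun p : ℝ × Ω => min p.1 (τ p.2) :=
      stopped_gen hτ (fun s _ => s) hid_props
    have hπ : Measurable[mOpt] fun p : ℝ × Ω => p.1 := by
      have hid_props' : (∀ t, Measurable[(hτ.min_const t).measurableSpace]
          (fun (_ : Ω) => t)) ∧
          (∀ (ω : Ω) t, ContinuousWithinAt (fun s : ℝ => s) (Set.Ici t) t) ∧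
          (∀ (ω : Ω) t, ∃ l : ℝ, Tendsto (fun s : ℝ => s)
            (nhdsWithin t (Set.Iio t)) (nhds l)) :=
        ⟨fun t => measurable_const, fun ω t => continuousWithinAt_id,
          fun ω t => ⟨t, continuousWithinAt_id⟩⟩
      exact measurable_optionalSigma_of _ (fun s _ => s) hid_props'
    have hA : MeasurableSet[mOpt] {p : ℝ × Ω | p.1 ≤ τ p.2} := by
      have heq : {p : ℝ × Ω | p.1 ≤ τ p.2} = {p : ℝ × Ω | p.1 ≤ min p.1 (τ p.2)} := by
        ext p; simp [le_min_iff]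
      rw [heq]
      exact measurableSet_le hπ hM
    have hRΦ : Measurable[mOpt] fun p : ℝ × Ω => R (min p.1 (τ p.2)) p.2 := hRopt.comp hΦ
    have hXΦ : Measurable[mOpt] fun p : ℝ × Ω => X (min p.1 (τ p.2)) p.2 := hXopt.comp hΦ
    have key : (fun p : ℝ × Ω => if p.1 ≤ τ p.2 then R p.1 p.2 else X (τ p.2) p.2)
        = fun p : ℝ × Ω =>
          if p.1 ≤ τ p.2 then R (min p.1 (τ p.2)) p.2 else X (min p.1 (τ p.2)) p.2 := by
      funext p
      by_cases h : p.1 ≤ τ p.2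
      · rw [if_pos h, if_pos h, min_eq_left h]
      · rw [if_neg h, if_neg h, min_eq_right (le_of_not_ge h)]
    show Measurable[mOpt] fun p : ℝ × Ω => if p.1 ≤ τ p.2 then R p.1 p.2 else X (τ p.2) p.2
    rw [key]
    exact Measurable.ite hA hRΦ hXΦ
  · filter_upwards with ω
    by_cases h : θ ω ≤ τ ω
    · rw [if_neg (not_lt.mpr h), if_pos h]
    · rw [if_pos (not_le.mp h), if_neg h]
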